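/- Let F_1, …, F_m : ℝⁿ → ℝ be differentiable functions whose gradients are L-Lipschitz, let F(w) = (1/m)∑_{i=1}^m F_i(w), and assume ‖∇F_i(w) − ∇F(w)‖ ≤ δ for all w ∈ ℝⁿ and all i. Then for any w_1, …, w_m ∈ ℝⁿ with w̄ = (1/m)∑_{i=1}^m w_i, ∑_{i=1}^m ‖∇F_i(w_i) − (1/m)∑_{j=1}^m ∇F_j(w_j)‖² ≤ 2mδ² + 8L² ∑_{i=1}^m ‖w_i − w̄‖². -/

import Mathlib

set_option maxHeartbeats 800000


open Finset

private lemma norm_sq_add_le {E : Type*} [NormedAddCommGroup E] (x y : E) :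
    ‖x + y‖ ^ 2 ≤ 2 * ‖x‖ ^ 2 + 2 * ‖y‖ ^ 2 := by
  have h := norm_add_le x y
  have h1 := norm_nonneg x
  have h2 := norm_nonneg y
  nlinarith [norm_nonneg (x + y), sq_nonneg (‖x‖ - ‖y‖)]

private lemma gradient_avg {n m : ℕ} (hm : 0 < m)
    (F : Fin m → EuclideanSpace ℝ (Fin n) → ℝ)
    (hdiff : ∀ i, Differentiable ℝ (F i)) (x : EuclideanSpace ℝ (Fin n)) :
    gradient (fun v => (1 / (m : ℝ)) * ∑ j, F j v) x
      = (1 / (m : ℝ)) • ∑ j, gradient (F j) x := by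
  apply HasGradientAt.gradient
  rw [hasGradientAt_iff_hasFDerivAt]
  have hfd : ∀ j : Fin m, HasFDerivAt (F j)
      (InnerProductSpace.toDual ℝ _ (gradient (F j) x)) x := fun j =>
    ((hdiff j x).hasGradientAt).hasFDerivAt
  have hsum : HasFDerivAt (fun v => ∑ j, F j v)
      (∑ j, InnerProductSpace.toDual ℝ _ (gradient (F j) x)) x :=
    HasFDerivAt.fun_sum (fun j _ => hfd j)
  rw [map_smul, map_sum]
  simpa [smul_eq_mul] using hsum.const_mul (1 / (m : ℝ))

theorem gradient_consensus_error_bound (n m : ℕ) (hm : 0 < m)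
    (F : Fin m → EuclideanSpace ℝ (Fin n) → ℝ) (L δ : ℝ)
    (hdiff : ∀ i, Differentiable ℝ (F i))
    (hLip : ∀ i (w w' : EuclideanSpace ℝ (Fin n)),
      ‖gradient (F i) w - gradient (F i) w'‖ ≤ L * ‖w - w'‖)
    (hhet : ∀ i (w : EuclideanSpace ℝ (Fin n)),
      ‖gradient (F i) w - gradient (fun v => (1 / (m : ℝ)) * ∑ j, F j v) w‖ ≤ δ)
    (w : Fin m → EuclideanSpace ℝ (Fin n)) :
    ∑ i, ‖gradient (F i) (w i) - (1 / (m : ℝ)) • ∑ j, gradient (F j) (w j)‖ ^ 2 ≤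
      2 * m * δ ^ 2 +
        8 * L ^ 2 * ∑ i, ‖w i - (1 / (m : ℝ)) • ∑ j, w j‖ ^ 2 := by
  set wb : EuclideanSpace ℝ (Fin n) := (1 / (m : ℝ)) • ∑ j, w j with hwb
  set a : Fin m → EuclideanSpace ℝ (Fin n) :=
    fun i => gradient (F i) (w i) - gradient (F i) wb with ha
  set b : Fin m → EuclideanSpace ℝ (Fin n) :=
    fun i => gradient (F i) wb - gradient (fun v => (1 / (m : ℝ)) * ∑ j, F j v) wb with hb
  have hgavg := gradient_avg hm F hdiff wb
  -- key decomposition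
  have hkey : ∀ i, gradient (F i) (w i) - (1 / (m : ℝ)) • ∑ j, gradient (F j) (w j)
      = b i + (a i - (1 / (m : ℝ)) • ∑ j, a j) := by
    intro i
    simp only [ha, hb, hgavg, smul_sub, Finset.sum_sub_distrib]
    abel
  have hδ : 0 ≤ δ := le_trans (norm_nonneg _) (hhet ⟨0, hm⟩ wb)
  have hL : ∀ i, ‖a i‖ ^ 2 ≤ L ^ 2 * ‖w i - wb‖ ^ 2 := by
    intro i
    have h := hLip i (w i) wb
    nlinarith [norm_nonneg (a i), norm_nonneg (w i - wb)]
  -- bound on the averaged a term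
  have havg : ‖(1 / (m : ℝ)) • ∑ j, a j‖ ^ 2 ≤ (1 / (m : ℝ)) * ∑ j, ‖a j‖ ^ 2 := by
    have h1 : ‖(1 / (m : ℝ)) • ∑ j, a j‖ ≤ (1 / (m : ℝ)) * ∑ j, ‖a j‖ := by
      rw [norm_smul]
      gcongr
      · simp
      · exact norm_sum_le _ _
    have h2 : (∑ j, ‖a j‖) ^ 2 ≤ m * ∑ j, ‖a j‖ ^ 2 := by
      have := sq_sum_le_card_mul_sum_sq (s := (univ : Finset (Fin m))) (f := fun j => ‖a j‖)
      simpa using this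
    have hm' : (0 : ℝ) < m := Nat.cast_pos.mpr hm
    calc ‖(1 / (m : ℝ)) • ∑ j, a j‖ ^ 2 ≤ ((1 / (m : ℝ)) * ∑ j, ‖a j‖) ^ 2 := by
          have := norm_nonneg ((1 / (m : ℝ)) • ∑ j, a j)
          nlinarith
      _ = (1 / (m : ℝ))^2 * (∑ j, ‖a j‖) ^ 2 := by ring
      _ ≤ (1 / (m : ℝ))^2 * (m * ∑ j, ‖a j‖ ^ 2) := by
          apply mul_le_mul_of_nonneg_left h2 (by positivity)
      _ = (1 / (m : ℝ)) * ∑ j, ‖a j‖ ^ 2 := by field_simp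
  -- pointwise bound
  have hpt : ∀ i, ‖gradient (F i) (w i) - (1 / (m : ℝ)) • ∑ j, gradient (F j) (w j)‖ ^ 2
      ≤ 2 * δ ^ 2 + 4 * ‖a i‖ ^ 2 + 4 * ((1 / (m : ℝ)) * ∑ j, ‖a j‖ ^ 2) := by
    intro i
    rw [hkey i]
    have h1 := norm_sq_add_le (b i) (a i - (1 / (m : ℝ)) • ∑ j, a j)
    have h2 : ‖a i - (1 / (m : ℝ)) • ∑ j, a j‖ ^ 2
        ≤ 2 * ‖a i‖ ^ 2 + 2 * ‖(1 / (m : ℝ)) • ∑ j, a j‖ ^ 2 := by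
      have := norm_sq_add_le (a i) (-((1 / (m : ℝ)) • ∑ j, a j))
      simpa [sub_eq_add_neg] using this
    have h3 : ‖b i‖ ^ 2 ≤ δ ^ 2 := by
      have := hhet i wb
      nlinarith [norm_nonneg (b i)]
    linarith [havg]
  calc ∑ i, ‖gradient (F i) (w i) - (1 / (m : ℝ)) • ∑ j, gradient (F j) (w j)‖ ^ 2
      ≤ ∑ i : Fin m, (2 * δ ^ 2 + 4 * ‖a i‖ ^ 2 + 4 * ((1 / (m : ℝ)) * ∑ j, ‖a j‖ ^ 2)) :=
        Finset.sum_le_sum (fun i _ => hpt i)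
    _ = 2 * m * δ ^ 2 + 8 * ∑ i, ‖a i‖ ^ 2 := by
        rw [Finset.sum_add_distrib, Finset.sum_add_distrib, Finset.sum_const,
          ← Finset.mul_sum, Finset.sum_const]
        have hm' : (m : ℝ) ≠ 0 := Nat.cast_ne_zero.mpr hm.ne'
        simp only [card_univ, Fintype.card_fin, nsmul_eq_mul]
        field_simp
        ring
    _ ≤ 2 * m * δ ^ 2 + 8 * ∑ i, L ^ 2 * ‖w i - wb‖ ^ 2 := by
        gcongr with i _
        exact hL i
    _ = 2 * m * δ ^ 2 + 8 * L ^ 2 * ∑ i, ‖w i - wb‖ ^ 2 := by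
        rw [← Finset.mul_sum]; ring
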